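/- arXiv:1702.06422 — 2 statements merged into one kernel-verified Lean document; each statement's English description precedes it below -/
import Mathlib

section
/- For n ≥ 1 and p ≥ 0: ∑_{k=0}^{n} k^p (-1)^k / C(n,k) = ((n+1)/(n+2)) · [(-1)^{n+p} B_{p,n+1}(-n) + B_{p,n+1}], where C(n,k) is the binomial coefficient. -/
def pBernoulli : ℕ → ℕ → ℚ
  | 0, _ => 1
  | n + 1, p => p * pBernoulli n p - ((p + 1 : ℚ) ^ 2 / (p + 2)) * pBernoulli n (p + 1)

/-- The p-Bernoulli polynomials `B_{n,p}(x) = ∑ C(n,k) x^{n-k} B_{k,p}`. -/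
def pBernoulliPoly (n p : ℕ) (x : ℚ) : ℚ :=
  ∑ k ∈ Finset.range (n + 1), (n.choose k : ℚ) * x ^ (n - k) * pBernoulli k p

open Finset

lemma choose_step (n k : ℕ) :
    ((n:ℚ)+2) * ((n+1).choose k : ℚ) * ((n+1).choose (k+1) : ℚ)
      = ((n:ℚ)+1) * ((n+2).choose (k+1) : ℚ) * (n.choose k : ℚ) := by
  have h1 := Nat.add_one_mul_choose_eq (n+1) k
  have h2 := Nat.add_one_mul_choose_eq n k
  have h1' : ((n:ℚ)+2) * ((n+1).choose k : ℚ) = ((n+2).choose (k+1) : ℚ) * ((k:ℚ)+1) := by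
    exact_mod_cast congrArg (Nat.cast : ℕ → ℚ) h1
  have h2' : ((n:ℚ)+1) * (n.choose k : ℚ) = ((n+1).choose (k+1) : ℚ) * ((k:ℚ)+1) := by
    exact_mod_cast congrArg (Nat.cast : ℕ → ℚ) h2
  have hk : ((k:ℚ)+1) ≠ 0 := by positivity
  apply mul_right_cancel₀ hk
  linear_combination ((((n+1).choose (k+1) : ℚ))*((k:ℚ)+1)) * h1' - ((((n+2).choose (k+1) : ℚ))*((k:ℚ)+1)) * h2'

lemma inv_choose_step {n k : ℕ} (h : k ≤ n) :
    1/(n.choose k : ℚ)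
      = ((n:ℚ)+1)/((n:ℚ)+2) * (1/((n+1).choose k : ℚ) + 1/((n+1).choose (k+1) : ℚ)) := by
  have c0 : (0:ℚ) < (n.choose k : ℚ) := by exact_mod_cast Nat.choose_pos h
  have c1 : (0:ℚ) < ((n+1).choose k : ℚ) := by
    exact_mod_cast Nat.choose_pos (h.trans (Nat.le_succ n))
  have c2 : (0:ℚ) < ((n+1).choose (k+1) : ℚ) := by
    exact_mod_cast Nat.choose_pos (Nat.succ_le_succ h)
  have hp : ((n+2).choose (k+1) : ℚ) = ((n+1).choose k : ℚ) + ((n+1).choose (k+1) : ℚ) := by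
    exact_mod_cast congrArg (Nat.cast : ℕ → ℚ) (Nat.choose_succ_succ (n+1) k)
  have hn2 : ((n:ℚ)+2) ≠ 0 := by positivity
  field_simp
  linear_combination choose_step n k + ((n:ℚ)+1) * (n.choose k : ℚ) * hp

def Sf (n p : ℕ) : ℚ := ∑ k ∈ Finset.range (n+1), (k:ℚ)^p * (-1)^k / (n.choose k : ℚ)

lemma lemA (n p : ℕ) :
    Sf n p = ((n:ℚ)+1)/((n:ℚ)+2) *
      ((-1)^n * ((n:ℚ)+1)^p + (-1)^p
        - ∑ i ∈ range p, (p.choose i : ℚ) * (-1)^(p-i) * Sf (n+1) i) := by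
  have key : Sf n p
      = ((n:ℚ)+1)/((n:ℚ)+2) *
        ((∑ k ∈ range (n+1), (k:ℚ)^p * (-1)^k / ((n+1).choose k : ℚ))
         + ∑ k ∈ range (n+1), (k:ℚ)^p * (-1)^k / ((n+1).choose (k+1) : ℚ)) := by
    rw [Sf, ← Finset.sum_add_distrib, Finset.mul_sum]
    refine Finset.sum_congr rfl fun k hk => ?_
    have hk' : k ≤ n := Nat.lt_succ_iff.mp (Finset.mem_range.mp hk)
    have h := inv_choose_step hk'
    calc (k:ℚ)^p * (-1)^k / (n.choose k : ℚ)
        = (k:ℚ)^p * (-1)^k * (1/(n.choose k : ℚ)) := by ring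
      _ = (k:ℚ)^p * (-1)^k * (((n:ℚ)+1)/((n:ℚ)+2)
            * (1/((n+1).choose k : ℚ) + 1/((n+1).choose (k+1) : ℚ))) := by rw [h]
      _ = _ := by ring
  have hA : Sf (n+1) p = (∑ k ∈ range (n+1), (k:ℚ)^p * (-1)^k / ((n+1).choose k : ℚ))
      + (-1:ℚ)^(n+1) * ((n:ℚ)+1)^p := by
    rw [Sf, Finset.sum_range_succ, Nat.choose_self]
    push_cast
    ring
  have hB : (∑ k ∈ range (n+1), (k:ℚ)^p * (-1)^k / ((n+1).choose (k+1) : ℚ))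
      = (∑ j ∈ range (n+2), -(((j:ℚ)-1)^p * (-1)^j / ((n+1).choose j : ℚ))) + (-1:ℚ)^p := by
    rw [show n+2 = (n+1)+1 from rfl, Finset.sum_range_succ'
      (fun j => -(((j:ℚ)-1)^p * (-1)^j / ((n+1).choose j : ℚ))) (n+1)]
    have e1 : (∑ k ∈ range (n+1), -((((k+1 : ℕ):ℚ)-1)^p * (-1:ℚ)^(k+1) / ((n+1).choose (k+1) : ℚ)))
        = ∑ k ∈ range (n+1), (k:ℚ)^p * (-1)^k / ((n+1).choose (k+1) : ℚ) :=
      Finset.sum_congr rfl fun k _ => by push_cast; ring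
    rw [e1]
    norm_num
  have hexp : ∀ j : ℕ, ((j:ℚ)-1)^p = ∑ i ∈ range (p+1), (j:ℚ)^i * (-1)^(p-i) * (p.choose i : ℚ) := by
    intro j; rw [sub_eq_add_neg, add_pow]
  have hC : ∑ j ∈ range (n+2), (((j:ℚ)-1)^p * (-1)^j / ((n+1).choose j : ℚ))
      = ∑ i ∈ range (p+1), (p.choose i : ℚ) * (-1)^(p-i) * Sf (n+1) i := by
    have hpt : ∀ j ∈ range (n+2), ((j:ℚ)-1)^p * (-1)^j / ((n+1).choose j : ℚ)
        = ∑ i ∈ range (p+1), (p.choose i : ℚ) * (-1)^(p-i)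
            * ((j:ℚ)^i * (-1)^j / ((n+1).choose j : ℚ)) := by
      intro j _
      rw [hexp j, Finset.sum_mul, Finset.sum_div]
      exact Finset.sum_congr rfl fun i _ => by ring
    rw [Finset.sum_congr rfl hpt, Finset.sum_comm]
    refine Finset.sum_congr rfl fun i _ => ?_
    rw [Sf, Finset.mul_sum]
  have hCsplit : ∑ i ∈ range (p+1), (p.choose i : ℚ) * (-1)^(p-i) * Sf (n+1) i
      = (∑ i ∈ range p, (p.choose i : ℚ) * (-1)^(p-i) * Sf (n+1) i) + Sf (n+1) p := by
    rw [Finset.sum_range_succ, Nat.choose_self, Nat.sub_self]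
    push_cast; ring
  rw [key]
  have hB' : (∑ k ∈ range (n+1), (k:ℚ)^p * (-1)^k / ((n+1).choose (k+1) : ℚ))
      = -((∑ i ∈ range p, (p.choose i : ℚ) * (-1)^(p-i) * Sf (n+1) i) + Sf (n+1) p) + (-1:ℚ)^p := by
    rw [hB, Finset.sum_neg_distrib, hC, hCsplit]
  rw [hB']
  have hA' : (∑ k ∈ range (n+1), (k:ℚ)^p * (-1)^k / ((n+1).choose k : ℚ))
      = Sf (n+1) p - (-1:ℚ)^(n+1) * ((n:ℚ)+1)^p := by
    rw [hA]; ring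
  rw [hA', pow_succ]
  ring

lemma lemI (p : ℕ) : ∀ q : ℕ, (-1:ℚ)^p * pBernoulli p q
    + (((q:ℚ)+1)/((q:ℚ)+2)) * ∑ i ∈ range p, (p.choose i : ℚ) * (-1)^i * pBernoulli i (q+1)
    = 1 := by
  induction p with
  | zero => intro q; simp [pBernoulli]
  | succ p IH =>
    intro q
    have IH1 := IH q
    have IH2 := IH (q+1)
    push_cast at IH2
    have hrec : pBernoulli (p+1) q = (q:ℚ) * pBernoulli p q
        - (((q:ℚ)+1)^2/((q:ℚ)+2)) * pBernoulli p (q+1) := by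
      rw [pBernoulli]
    have hrec2 : ∀ i : ℕ, pBernoulli (i+1) (q+1) = ((q:ℚ)+1) * pBernoulli i (q+1)
        - (((q:ℚ)+2)^2/((q:ℚ)+3)) * pBernoulli i (q+1+1) := by
      intro i; rw [pBernoulli]; push_cast; ring
    have hsum : ∑ i ∈ range (p+1), ((p+1).choose i : ℚ) * (-1)^i * pBernoulli i (q+1)
        = ((∑ i ∈ range p, (p.choose i : ℚ) * (-1)^i * pBernoulli i (q+1))
            + (-1:ℚ)^p * pBernoulli p (q+1))
          - ((q:ℚ)+1) * (∑ i ∈ range p, (p.choose i : ℚ) * (-1)^i * pBernoulli i (q+1))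
          + (((q:ℚ)+2)^2/((q:ℚ)+3))
            * ∑ i ∈ range p, (p.choose i : ℚ) * (-1)^i * pBernoulli i (q+1+1) := by
      rw [Finset.sum_range_succ'
        (fun i => ((p+1).choose i : ℚ) * (-1)^i * pBernoulli i (q+1)) p]
      have e1 : ∀ i : ℕ, (((p+1).choose (i+1) : ℕ) : ℚ) * (-1:ℚ)^(i+1) * pBernoulli (i+1) (q+1)
          = ((p.choose i : ℚ) * (-1)^i * pBernoulli (i+1) (q+1)) * (-1)
            + ((p.choose (i+1) : ℚ) * (-1)^(i+1) * pBernoulli (i+1) (q+1)) := by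
        intro i
        rw [Nat.choose_succ_succ]
        push_cast
        ring
      rw [Finset.sum_congr rfl fun i _ => e1 i, Finset.sum_add_distrib]
      have hB0 : pBernoulli 0 (q+1) = 1 := by simp [pBernoulli]
      have e2 : (∑ i ∈ range p, ((p.choose (i+1) : ℚ) * (-1:ℚ)^(i+1) * pBernoulli (i+1) (q+1)))
            + (((p+1).choose 0 : ℚ) * (-1:ℚ)^(0:ℕ) * pBernoulli 0 (q+1))
          = (∑ i ∈ range p, (p.choose i : ℚ) * (-1)^i * pBernoulli i (q+1))
            + (-1:ℚ)^p * pBernoulli p (q+1) := by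
        have hss := Finset.sum_range_succ'
          (fun i => (p.choose i : ℚ) * (-1:ℚ)^i * pBernoulli i (q+1)) p
        rw [Finset.sum_range_succ] at hss
        simp only [Nat.choose_self, Nat.choose_zero_right, Nat.cast_one, one_mul, pow_zero,
          hB0, mul_one] at hss ⊢
        linarith [hss]
      have e3 : (∑ i ∈ range p, ((p.choose i : ℚ) * (-1:ℚ)^i * pBernoulli (i+1) (q+1)) * (-1))
          = - ((q:ℚ)+1) * (∑ i ∈ range p, (p.choose i : ℚ) * (-1)^i * pBernoulli i (q+1))
            + (((q:ℚ)+2)^2/((q:ℚ)+3))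
              * ∑ i ∈ range p, (p.choose i : ℚ) * (-1)^i * pBernoulli i (q+1+1) := by
        rw [neg_mul, Finset.mul_sum, Finset.mul_sum, ← Finset.sum_neg_distrib,
          ← Finset.sum_add_distrib]
        refine Finset.sum_congr rfl fun i _ => ?_
        rw [hrec2 i]
        ring
      linear_combination e2 + e3
    rw [hsum, hrec]
    have h2 : ((q:ℚ)+2) ≠ 0 := by positivity
    have h3 : ((q:ℚ)+3) ≠ 0 := by positivity
    have h3' : ((q:ℚ)+1+2) ≠ 0 := by positivity
    linear_combination (norm := skip) (-(q:ℚ))*IH1 + ((q:ℚ)+1)*IH2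
    field_simp
    ring

lemma binom_head (N : ℕ) (x : ℚ) :
    ∑ m ∈ range N, (N.choose m : ℚ) * x^m = (x+1)^N - x^N := by
  have h := add_pow x 1 N
  rw [Finset.sum_range_succ, Nat.choose_self] at h
  simp only [one_pow, Nat.cast_one, mul_one, Nat.sub_self, pow_zero] at h
  have e : ∑ m ∈ range N, (N.choose m : ℚ) * x^m = ∑ m ∈ range N, x^m * (N.choose m : ℚ) :=
    Finset.sum_congr rfl fun m _ => mul_comm _ _
  rw [e]
  linarith [h]

lemma binom_tail (N : ℕ) (x : ℚ) :
    ∑ m ∈ range N, (N.choose (m+1) : ℚ) * x^(N-(m+1)) = (x+1)^N - x^N := by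
  have h := add_pow 1 x N
  rw [Finset.sum_range_succ'] at h
  simp only [one_pow, Nat.cast_one, one_mul, Nat.sub_zero, Nat.choose_zero_right, mul_one] at h
  have e : ∑ m ∈ range N, (N.choose (m+1) : ℚ) * x^(N-(m+1))
      = ∑ m ∈ range N, x^(N-(m+1)) * (N.choose (m+1) : ℚ) :=
    Finset.sum_congr rfl fun m _ => mul_comm _ _
  rw [e]
  have hx : (1+x)^N = (x+1)^N := by ring
  linarith [h, hx ▸ h]

lemma tri (N : ℕ) (f : ℕ → ℕ → ℚ) :
    ∑ j ∈ range N, ∑ i ∈ range j, f i j = ∑ i ∈ range N, ∑ j ∈ Ico (i+1) N, f i j := by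
  simp only [Finset.range_eq_Ico]
  exact (Finset.sum_Ico_Ico_comm' 0 N f).symm

lemma tri2 (N : ℕ) (f : ℕ → ℕ → ℚ) :
    ∑ i ∈ range N, ∑ k ∈ range (i+1), f k i = ∑ k ∈ range N, ∑ i ∈ Ico k N, f k i := by
  simp only [Finset.range_eq_Ico]
  exact (Finset.sum_Ico_Ico_comm 0 N f).symm

lemma choose_mul_q {p i j : ℕ} (hj : j ≤ p) (hi : i ≤ j) :
    (p.choose j : ℚ) * (j.choose i : ℚ) = (p.choose i : ℚ) * ((p-i).choose (j-i) : ℚ) := by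
  exact_mod_cast congrArg (Nat.cast : ℕ → ℚ) (Nat.choose_mul (n := p) hi)

lemma neg_one_pow_sub {p j : ℕ} (hj : j ≤ p) :
    (-1:ℚ)^p * (-1:ℚ)^(p-j) = (-1:ℚ)^j := by
  rw [← pow_add]
  have : p + (p - j) = 2*(p-j) + j := by omega
  rw [this, pow_add, pow_mul, neg_one_sq, one_pow, one_mul]

lemma lemII (p n : ℕ) :
    pBernoulliPoly p (n+1) (-(n:ℚ))
      = (-(n:ℚ)-1)^p + (((n:ℚ)+2)/((n:ℚ)+3))
          * ∑ i ∈ range p, (p.choose i : ℚ) * pBernoulliPoly i (n+2) (-(n:ℚ)-1) := by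
  set c : ℚ := ((n:ℚ)+2)/((n:ℚ)+3) with hc
  -- key from lemI
  have key : ∀ j : ℕ, (-1:ℚ)^j * pBernoulli j (n+1)
      + c * ∑ i ∈ range j, (j.choose i : ℚ)*(-1)^i*pBernoulli i (n+2) = 1 := by
    intro j
    have h := lemI j (n+1)
    have hcast : ((((n+1:ℕ)):ℚ)+1)/((((n+1:ℕ)):ℚ)+2) = c := by rw [hc]; push_cast; ring
    rw [hcast] at h
    exact h
  -- weighted sum of key
  have h0 : ∑ j ∈ range (p+1), ((p.choose j : ℚ) * (n:ℚ)^(p-j) * ((-1:ℚ)^j * pBernoulli j (n+1))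
        + c * ((p.choose j : ℚ) * (n:ℚ)^(p-j)
            * ∑ i ∈ range j, (j.choose i : ℚ)*(-1)^i*pBernoulli i (n+2)))
      = ∑ j ∈ range (p+1), (p.choose j : ℚ) * (n:ℚ)^(p-j) := by
    refine Finset.sum_congr rfl fun j _ => ?_
    calc (p.choose j : ℚ) * (n:ℚ)^(p-j) * ((-1:ℚ)^j * pBernoulli j (n+1))
          + c * ((p.choose j : ℚ) * (n:ℚ)^(p-j)
              * ∑ i ∈ range j, (j.choose i : ℚ)*(-1)^i*pBernoulli i (n+2))
        = (p.choose j : ℚ) * (n:ℚ)^(p-j) * ((-1:ℚ)^j * pBernoulli j (n+1)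
            + c * ∑ i ∈ range j, (j.choose i : ℚ)*(-1)^i*pBernoulli i (n+2)) := by ring
      _ = (p.choose j : ℚ) * (n:ℚ)^(p-j) := by rw [key j, mul_one]
  rw [Finset.sum_add_distrib] at h0
  -- binomial RHS
  have hbin : ∑ j ∈ range (p+1), (p.choose j : ℚ) * (n:ℚ)^(p-j) = ((n:ℚ)+1)^p := by
    have h := add_pow 1 (n:ℚ) p
    simp only [one_pow, one_mul] at h
    have e : ∑ j ∈ range (p+1), (p.choose j : ℚ) * (n:ℚ)^(p-j)
        = ∑ j ∈ range (p+1), (n:ℚ)^(p-j) * (p.choose j : ℚ) :=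
      Finset.sum_congr rfl fun m _ => mul_comm _ _
    rw [e, ← h]; ring
  -- first part is (-1)^p * Q
  have hQ : ∑ j ∈ range (p+1), (p.choose j : ℚ) * (n:ℚ)^(p-j) * ((-1:ℚ)^j * pBernoulli j (n+1))
      = (-1:ℚ)^p * pBernoulliPoly p (n+1) (-(n:ℚ)) := by
    rw [pBernoulliPoly, Finset.mul_sum]
    refine Finset.sum_congr rfl fun j hj => ?_
    have hj' : j ≤ p := Nat.lt_succ_iff.mp (Finset.mem_range.mp hj)
    have hneg : (-(n:ℚ))^(p-j) = (-1:ℚ)^(p-j) * (n:ℚ)^(p-j) := by rw [neg_pow]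
    rw [hneg]
    linear_combination (-((p.choose j : ℚ) * (n:ℚ)^(p-j) * pBernoulli j (n+1)))
      * (neg_one_pow_sub hj')
  -- middle double sum
  have hM : ∑ j ∈ range (p+1), c * ((p.choose j : ℚ) * (n:ℚ)^(p-j)
        * ∑ i ∈ range j, (j.choose i : ℚ)*(-1)^i*pBernoulli i (n+2))
      = c * ∑ i ∈ range p, (p.choose i : ℚ)*(-1)^i*pBernoulli i (n+2)
          * (((n:ℚ)+1)^(p-i) - (n:ℚ)^(p-i)) := by
    rw [Finset.mul_sum]
    have e1 : ∀ j ∈ range (p+1), c * ((p.choose j : ℚ) * (n:ℚ)^(p-j)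
          * ∑ i ∈ range j, (j.choose i : ℚ)*(-1)^i*pBernoulli i (n+2))
        = ∑ i ∈ range j, c * ((p.choose j : ℚ) * (j.choose i : ℚ) * (-1:ℚ)^i
            * pBernoulli i (n+2) * (n:ℚ)^(p-j)) := by
      intro j _
      rw [Finset.mul_sum, Finset.mul_sum]
      exact Finset.sum_congr rfl fun i _ => by ring
    rw [Finset.sum_congr rfl e1,
      tri (p+1) (fun i j => c * ((p.choose j : ℚ) * (j.choose i : ℚ) * (-1:ℚ)^i
        * pBernoulli i (n+2) * (n:ℚ)^(p-j)))]
    have inner : ∀ i ∈ range (p+1), ∑ j ∈ Ico (i+1) (p+1),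
          c * ((p.choose j : ℚ) * (j.choose i : ℚ) * (-1:ℚ)^i
            * pBernoulli i (n+2) * (n:ℚ)^(p-j))
        = c * ((p.choose i : ℚ)*(-1:ℚ)^i*pBernoulli i (n+2)
            * (((n:ℚ)+1)^(p-i) - (n:ℚ)^(p-i))) := by
      intro i hi
      have hi' : i ≤ p := Nat.lt_succ_iff.mp (Finset.mem_range.mp hi)
      have e2 : ∀ j ∈ Ico (i+1) (p+1),
          c * ((p.choose j : ℚ) * (j.choose i : ℚ) * (-1:ℚ)^i
            * pBernoulli i (n+2) * (n:ℚ)^(p-j))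
          = (c * ((p.choose i : ℚ) * (-1:ℚ)^i * pBernoulli i (n+2)))
            * (((p-i).choose (j-i) : ℚ) * (n:ℚ)^(p-j)) := by
        intro j hj
        obtain ⟨h1, h2⟩ := Finset.mem_Ico.mp hj
        have hcm := choose_mul_q (Nat.lt_succ_iff.mp h2) (le_of_lt h1)
        linear_combination (c * (-1:ℚ)^i * pBernoulli i (n+2) * (n:ℚ)^(p-j)) * hcm
      rw [Finset.sum_congr rfl e2, ← Finset.mul_sum]
      have e3 : ∑ j ∈ Ico (i+1) (p+1), ((p-i).choose (j-i) : ℚ) * (n:ℚ)^(p-j)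
          = ((n:ℚ)+1)^(p-i) - (n:ℚ)^(p-i) := by
        rw [Finset.sum_Ico_eq_sum_range]
        have hN : (p+1) - (i+1) = p - i := by omega
        rw [hN]
        have e4 : ∀ m ∈ range (p-i), (((p-i).choose ((i+1+m)-i)) : ℚ) * (n:ℚ)^(p-(i+1+m))
            = (((p-i).choose (m+1)) : ℚ) * (n:ℚ)^((p-i)-(m+1)) := by
          intro m hm
          have h1 : (i+1+m)-i = m+1 := by omega
          have h2 : p-(i+1+m) = (p-i)-(m+1) := by omega
          rw [h1, h2]
        rw [Finset.sum_congr rfl e4, binom_tail]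
      rw [e3]
      ring
    rw [Finset.sum_congr rfl inner, Finset.sum_range_succ]
    rw [Nat.sub_self]
    simp only [pow_zero, sub_self, mul_zero]
    rw [add_zero, ← Finset.mul_sum]
  rw [hbin, hQ, hM] at h0
  -- right-hand sum transformation
  have hR : ∑ i ∈ range p, (p.choose i : ℚ) * pBernoulliPoly i (n+2) (-(n:ℚ)-1)
      = ∑ k ∈ range p, (p.choose k : ℚ) * pBernoulli k (n+2)
          * ((-(n:ℚ))^(p-k) - (-(n:ℚ)-1)^(p-k)) := by
    have e1 : ∀ i ∈ range p, (p.choose i : ℚ) * pBernoulliPoly i (n+2) (-(n:ℚ)-1)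
        = ∑ k ∈ range (i+1), (p.choose i : ℚ) * (i.choose k : ℚ)
            * (-(n:ℚ)-1)^(i-k) * pBernoulli k (n+2) := by
      intro i _
      rw [pBernoulliPoly, Finset.mul_sum]
      exact Finset.sum_congr rfl fun k _ => by ring
    rw [Finset.sum_congr rfl e1,
      tri2 p (fun k i => (p.choose i : ℚ) * (i.choose k : ℚ)
        * (-(n:ℚ)-1)^(i-k) * pBernoulli k (n+2))]
    refine Finset.sum_congr rfl fun k hk => ?_
    have hk' : k < p := Finset.mem_range.mp hk
    have e2 : ∀ i ∈ Ico k p, (p.choose i : ℚ) * (i.choose k : ℚ)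
          * (-(n:ℚ)-1)^(i-k) * pBernoulli k (n+2)
        = ((p.choose k : ℚ) * pBernoulli k (n+2))
          * (((p-k).choose (i-k) : ℚ) * (-(n:ℚ)-1)^(i-k)) := by
      intro i hi
      obtain ⟨h1, h2⟩ := Finset.mem_Ico.mp hi
      have hcm := choose_mul_q (le_of_lt h2) h1
      linear_combination ((-(n:ℚ)-1)^(i-k) * pBernoulli k (n+2)) * hcm
    rw [Finset.sum_congr rfl e2, ← Finset.mul_sum]
    have e3 : ∑ i ∈ Ico k p, ((p-k).choose (i-k) : ℚ) * (-(n:ℚ)-1)^(i-k)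
        = (-(n:ℚ))^(p-k) - (-(n:ℚ)-1)^(p-k) := by
      rw [Finset.sum_Ico_eq_sum_range]
      have e4 : ∀ m ∈ range (p-k), (((p-k).choose ((k+m)-k)) : ℚ) * (-(n:ℚ)-1)^((k+m)-k)
          = (((p-k).choose m) : ℚ) * (-(n:ℚ)-1)^m := by
        intro m _
        have h1 : (k+m)-k = m := by omega
        rw [h1]
      rw [Finset.sum_congr rfl e4, binom_head]
      have : (-(n:ℚ)-1) + 1 = -(n:ℚ) := by ring
      rw [this]
    rw [e3]
  -- final assembly
  have hsq : (-1:ℚ)^p * (-1:ℚ)^p = 1 := by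
    rw [← pow_add]
    have : p + p = 2*p := by omega
    rw [this, pow_mul, neg_one_sq, one_pow]
  have hnegp : (-(n:ℚ)-1)^p = (-1:ℚ)^p * ((n:ℚ)+1)^p := by
    have : (-(n:ℚ)-1) = (-1) * ((n:ℚ)+1) := by ring
    rw [this, mul_pow]
  have hT : (-1:ℚ)^p * (∑ i ∈ range p, (p.choose i : ℚ)*(-1:ℚ)^i*pBernoulli i (n+2)
        * (((n:ℚ)+1)^(p-i) - (n:ℚ)^(p-i)))
      = -(∑ k ∈ range p, (p.choose k : ℚ) * pBernoulli k (n+2)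
          * ((-(n:ℚ))^(p-k) - (-(n:ℚ)-1)^(p-k))) := by
    rw [Finset.mul_sum, ← Finset.sum_neg_distrib]
    refine Finset.sum_congr rfl fun i hi => ?_
    have hi' : i ≤ p := le_of_lt (Finset.mem_range.mp hi)
    have h1 : (-(n:ℚ))^(p-i) = (-1:ℚ)^(p-i) * (n:ℚ)^(p-i) := by rw [neg_pow]
    have h2 : (-(n:ℚ)-1)^(p-i) = (-1:ℚ)^(p-i) * ((n:ℚ)+1)^(p-i) := by
      have : (-(n:ℚ)-1) = (-1) * ((n:ℚ)+1) := by ring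
      rw [this, mul_pow]
    rw [h1, h2]
    have hs := neg_one_pow_sub hi'
    -- (-1)^p * (-1)^i = (-1)^(p-i) needed; from hs: (-1)^p*(-1)^(p-i) = (-1)^i
    -- multiply: (-1)^p (-1)^i [(n+1)^e - n^e] = -( C B ((-1)^e n^e - (-1)^e (n+1)^e))
    have hs2 : (-1:ℚ)^p * (-1:ℚ)^i = (-1:ℚ)^(p-i) := by
      rw [← pow_add]
      have hpi : p + i = 2*i + (p - i) := by omega
      rw [hpi, pow_add, pow_mul, neg_one_sq, one_pow, one_mul]
    linear_combination ((p.choose i : ℚ) * pBernoulli i (n+2)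
      * (((n:ℚ)+1)^(p-i) - (n:ℚ)^(p-i))) * hs2
  rw [hR]
  linear_combination ((-1:ℚ)^p) * h0 - (pBernoulliPoly p (n+1) (-(n:ℚ))) * hsq
    - c * hT - hnegp


lemma main' (p : ℕ) : ∀ n : ℕ, Sf n p
    = ((n:ℚ)+1)/((n:ℚ)+2)
      * ((-1:ℚ)^(n+p) * pBernoulliPoly p (n+1) (-(n:ℚ)) + pBernoulli p (n+1)) := by
  induction p using Nat.strong_induction_on with
  | _ p IH =>
    intro n
    have hIH : ∀ i ∈ range p, (p.choose i : ℚ) * (-1:ℚ)^(p-i) * Sf (n+1) i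
        = (p.choose i : ℚ) * (-1:ℚ)^(p-i) * ((((n:ℚ)+2)/((n:ℚ)+3)) *
            ((-1:ℚ)^(n+1+i) * pBernoulliPoly i (n+2) (-(n:ℚ)-1) + pBernoulli i (n+2))) := by
      intro i hi
      have h := IH i (Finset.mem_range.mp hi) (n+1)
      push_cast at h
      rw [show ((n:ℚ)+1+1)/((n:ℚ)+1+2) = ((n:ℚ)+2)/((n:ℚ)+3) from by ring] at h
      rw [show -((n:ℚ)+1) = -(n:ℚ)-1 from by ring] at h
      rw [show n+1+1 = n+2 from rfl] at h
      rw [h]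
    have hsplit : ∑ i ∈ range p, (p.choose i : ℚ) * (-1:ℚ)^(p-i) * Sf (n+1) i
        = (((n:ℚ)+2)/((n:ℚ)+3)) *
            (-((-1:ℚ)^(n+p)) * (∑ i ∈ range p, (p.choose i:ℚ)
                * pBernoulliPoly i (n+2) (-(n:ℚ)-1))
              + (-1:ℚ)^p * (∑ i ∈ range p, (p.choose i:ℚ) * (-1:ℚ)^i
                * pBernoulli i (n+2))) := by
      rw [Finset.sum_congr rfl hIH, mul_add, Finset.mul_sum, Finset.mul_sum, Finset.mul_sum,
        Finset.mul_sum, ← Finset.sum_add_distrib]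
      refine Finset.sum_congr rfl fun i hi => ?_
      have hi' : i ≤ p := le_of_lt (Finset.mem_range.mp hi)
      have h1 : (-1:ℚ)^(p-i) * (-1:ℚ)^(n+1+i) = -((-1:ℚ)^(n+p)) := by
        rw [← pow_add]
        have hpe : (p-i) + (n+1+i) = (n+p)+1 := by omega
        rw [hpe, pow_succ]; ring
      have h2 : (-1:ℚ)^p * (-1:ℚ)^i = (-1:ℚ)^(p-i) := by
        rw [← pow_add]
        have hpi : p + i = 2*i + (p - i) := by omega
        rw [hpi, pow_add, pow_mul, neg_one_sq, one_pow, one_mul]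
      linear_combination ((p.choose i:ℚ) * (((n:ℚ)+2)/((n:ℚ)+3))
          * pBernoulliPoly i (n+2) (-(n:ℚ)-1)) * h1
        - ((p.choose i:ℚ) * (((n:ℚ)+2)/((n:ℚ)+3)) * pBernoulli i (n+2)) * h2
    rw [lemA n p, hsplit]
    have hI := lemI p (n+1)
    push_cast at hI
    rw [show ((n:ℚ)+1+1)/((n:ℚ)+1+2) = ((n:ℚ)+2)/((n:ℚ)+3) from by ring] at hI
    rw [show n+1+1 = n+2 from rfl] at hI
    have hII := lemII p n
    have hnp : (-1:ℚ)^(n+p) = (-1:ℚ)^n * (-1:ℚ)^p := by rw [pow_add]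
    have hsq : (-1:ℚ)^p * (-1:ℚ)^p = 1 := by
      rw [← pow_add]
      have : p + p = 2*p := by omega
      rw [this, pow_mul, neg_one_sq, one_pow]
    have hnegp : (-(n:ℚ)-1)^p = (-1:ℚ)^p * ((n:ℚ)+1)^p := by
      rw [show -(n:ℚ)-1 = (-1) * ((n:ℚ)+1) from by ring, mul_pow]
    set cn : ℚ := ((n:ℚ)+1)/((n:ℚ)+2)
    set c' : ℚ := ((n:ℚ)+2)/((n:ℚ)+3)
    set SQ : ℚ := ∑ i ∈ range p, (p.choose i:ℚ) * pBernoulliPoly i (n+2) (-(n:ℚ)-1)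
    set SB : ℚ := ∑ i ∈ range p, (p.choose i:ℚ) * (-1:ℚ)^i * pBernoulli i (n+2)
    set Qp : ℚ := pBernoulliPoly p (n+1) (-(n:ℚ))
    set Bp : ℚ := pBernoulli p (n+1)
    linear_combination (cn * c' * SQ - cn * Qp) * hnp
      + (- cn * ((-1:ℚ)^n) * ((-1:ℚ)^p)) * hII
      + (- cn * ((-1:ℚ)^n) * ((-1:ℚ)^p)) * hnegp
      + (- cn * ((-1:ℚ)^n) * ((n:ℚ)+1)^p + cn * Bp) * hsq
      + (- cn * ((-1:ℚ)^p)) * hI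

theorem faulhaber_type_sum (n p : ℕ) (hn : 1 ≤ n) :
    ∑ k ∈ Finset.range (n + 1), (k : ℚ) ^ p * (-1) ^ k / (n.choose k : ℚ)
      = ((n + 1 : ℚ) / (n + 2))
        * ((-1) ^ (n + p) * pBernoulliPoly p (n + 1) (-(n : ℚ)) + pBernoulli p (n + 1)) := by
  have h := main' p n
  rw [Sf] at h
  exact h
end

section
/- For n ≥ 1 and p ≥ 1: p^2 · ∑_{k=1}^{n} C(n+1, k+1) y^{n-k} B_{k,p} = (p+1)·y^{n+1} + p(n+1)·y^n - (p+1)·B_{n+1,p-1}(1+y), as an identity of polynomials in y. -/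
open Finset

lemma pB_succ (n p : ℕ) : pBernoulli (n+1) p
    = (p : ℚ) * pBernoulli n p - ((p + 1 : ℚ) ^ 2 / (p + 2)) * pBernoulli n (p + 1) := rfl

lemma choose_swap (N i j : ℕ) :
    N.choose j * (N - j).choose i = N.choose i * (N - i).choose j := by
  rcases le_or_gt (i + j) N with h | h
  · have h1 := Nat.choose_mul (n := N) (k := i + j) (s := j) (Nat.le_add_left _ _)
    have h2 := Nat.choose_mul (n := N) (k := i + j) (s := i) (Nat.le_add_right _ _)
    rw [Nat.add_sub_cancel] at h1
    rw [Nat.add_sub_cancel_left] at h2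
    rw [← h1, ← h2, Nat.choose_symm_add]
  · have e1 : (N - j).choose i = 0 ∨ N.choose j = 0 := by
      rcases le_or_gt j N with hj | hj
      · exact Or.inl (Nat.choose_eq_zero_of_lt (by omega))
      · exact Or.inr (Nat.choose_eq_zero_of_lt hj)
    have e2 : (N - i).choose j = 0 ∨ N.choose i = 0 := by
      rcases le_or_gt i N with hi | hi
      · exact Or.inl (Nat.choose_eq_zero_of_lt (by omega))
      · exact Or.inr (Nat.choose_eq_zero_of_lt hi)
    rcases e1 with e | e <;> rcases e2 with f | f <;> simp [e, f]

lemma Trec (n q : ℕ) :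
    ∑ j ∈ range (n+2), ((n+1).choose j : ℚ) * pBernoulli j q
      = ((q : ℚ)+1) * (∑ j ∈ range (n+1), (n.choose j : ℚ) * pBernoulli j q)
        - ((q : ℚ)+1)^2/((q : ℚ)+2)
            * (∑ j ∈ range (n+1), (n.choose j : ℚ) * pBernoulli j (q+1)) := by
  rw [Finset.sum_range_succ']
  have split : ∀ j ∈ range (n+1),
      ((n+1).choose (j+1) : ℚ) * pBernoulli (j+1) q
        = ((q : ℚ) * ((n.choose j : ℚ) * pBernoulli j q)
            - ((q : ℚ)+1)^2/((q : ℚ)+2) * ((n.choose j : ℚ) * pBernoulli j (q+1)))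
          + (n.choose (j+1) : ℚ) * pBernoulli (j+1) q := by
    intro j _
    rw [Nat.choose_succ_succ' n j, pB_succ]
    push_cast
    ring
  rw [Finset.sum_congr rfl split, Finset.sum_add_distrib, Finset.sum_sub_distrib,
    ← Finset.mul_sum, ← Finset.mul_sum]
  have shift : ∑ j ∈ range (n+1), (n.choose (j+1) : ℚ) * pBernoulli (j+1) q
      = (∑ j ∈ range (n+1), (n.choose j : ℚ) * pBernoulli j q) - 1 := by
    have := Finset.sum_range_succ' (fun j => (n.choose j : ℚ) * pBernoulli j q) (n+1)
    have top : (n.choose (n+1) : ℚ) * pBernoulli (n+1) q = 0 := by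
      rw [Nat.choose_eq_zero_of_lt (Nat.lt_succ_self n)]; simp
    rw [Finset.sum_range_succ, top, add_zero] at this
    have h0 : ((n.choose 0 : ℕ) : ℚ) * pBernoulli 0 q = 1 := by simp [pBernoulli]
    rw [h0] at this
    linarith
  rw [shift]
  simp [pBernoulli]
  ring

lemma Tclosed : ∀ n q : ℕ,
    ∑ j ∈ range (n+3), ((n+2).choose j : ℚ) * pBernoulli j q
      = -((q : ℚ)+1)^2/((q : ℚ)+2) * pBernoulli (n+1) (q+1) := by
  intro n
  induction n with
  | zero =>
    intro q
    have h2 : ((q : ℚ)+2) ≠ 0 := by positivity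
    have h3 : ((q : ℚ)+3) ≠ 0 := by positivity
    simp only [Finset.sum_range_succ, Finset.sum_range_zero, pB_succ]
    simp [pBernoulli]
    field_simp
    ring
  | succ n ih =>
    intro q
    have h2 : ((q : ℚ)+2) ≠ 0 := by positivity
    have h3 : ((q : ℚ)+3) ≠ 0 := by positivity
    have key : ∑ j ∈ range (n+1+3), ((n+1+2).choose j : ℚ) * pBernoulli j q
        = ((q : ℚ)+1) * (∑ j ∈ range (n+3), ((n+2).choose j : ℚ) * pBernoulli j q)
          - ((q : ℚ)+1)^2/((q : ℚ)+2)
              * (∑ j ∈ range (n+3), ((n+2).choose j : ℚ) * pBernoulli j (q+1)) :=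
      Trec (n+2) q
    rw [key, ih q, ih (q+1), pB_succ (n+1) (q+1)]
    push_cast
    field_simp
    ring

lemma poly_expand (n q : ℕ) (y : ℚ) :
    pBernoulliPoly (n+1) q (1+y)
      = ∑ i ∈ range (n+2), ((n+1).choose i : ℚ) * y^i
          * (∑ j ∈ range (n+2-i), ((n+1-i).choose j : ℚ) * pBernoulli j q) := by
  unfold pBernoulliPoly
  have binom : ∀ j ∈ range (n+2),
      ((n+1).choose j : ℚ) * (1+y) ^ (n+1-j) * pBernoulli j q
        = ∑ i ∈ range (n+2),
            ((n+1).choose j : ℚ) * ((n+1-j).choose i : ℚ) * y^i * pBernoulli j q := by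
    intro j hj
    have hpow : (1+y) ^ (n+1-j) = ∑ i ∈ range (n+2), ((n+1-j).choose i : ℚ) * y^i := by
      rw [add_comm 1 y, add_pow]
      have sub : range (n+1-j+1) ⊆ range (n+2) := by
        apply Finset.range_subset_range.mpr; omega
      rw [Finset.sum_subset sub]
      · apply Finset.sum_congr rfl
        intro i _
        ring
      · intro i _ hi
        rw [Finset.mem_range, not_lt] at hi
        rw [Nat.choose_eq_zero_of_lt (by omega)]
        simp
    rw [hpow, Finset.mul_sum, Finset.sum_mul]
    apply Finset.sum_congr rfl
    intro i _
    ring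
  rw [Finset.sum_congr rfl binom, Finset.sum_comm]
  apply Finset.sum_congr rfl
  intro i hi
  rw [Finset.mem_range] at hi
  have swap : ∀ j ∈ range (n+2),
      ((n+1).choose j : ℚ) * ((n+1-j).choose i : ℚ) * y^i * pBernoulli j q
        = ((n+1).choose i : ℚ) * y^i * (((n+1-i).choose j : ℚ) * pBernoulli j q) := by
    intro j _
    have := choose_swap (n+1) i j
    have cast : ((n+1).choose j : ℚ) * ((n+1-j).choose i : ℚ)
        = ((n+1).choose i : ℚ) * ((n+1-i).choose j : ℚ) := by
      exact_mod_cast congrArg (Nat.cast : ℕ → ℚ) this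
    calc ((n+1).choose j : ℚ) * ((n+1-j).choose i : ℚ) * y^i * pBernoulli j q
        = (((n+1).choose j : ℚ) * ((n+1-j).choose i : ℚ)) * (y^i * pBernoulli j q) := by ring
      _ = (((n+1).choose i : ℚ) * ((n+1-i).choose j : ℚ)) * (y^i * pBernoulli j q) := by
          rw [cast]
      _ = ((n+1).choose i : ℚ) * y^i * (((n+1-i).choose j : ℚ) * pBernoulli j q) := by ring
  rw [Finset.sum_congr rfl swap, ← Finset.mul_sum]
  congr 1
  have sub : range (n+2-i) ⊆ range (n+2) := by
    apply Finset.range_subset_range.mpr; omega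
  rw [Finset.sum_subset sub]
  intro j _ hj
  rw [Finset.mem_range, not_lt] at hj
  rw [Nat.choose_eq_zero_of_lt (by omega)]
  simp

theorem pBernoulli_sum_identity (n p : ℕ) (hn : 1 ≤ n) (hp : 1 ≤ p) (y : ℚ) :
    (p : ℚ) ^ 2 * ∑ k ∈ Finset.Icc 1 n, ((n + 1).choose (k + 1) : ℚ) * y ^ (n - k) * pBernoulli k p
      = (p + 1 : ℚ) * y ^ (n + 1) + (p : ℚ) * (n + 1) * y ^ n
        - (p + 1 : ℚ) * pBernoulliPoly (n + 1) (p - 1) (1 + y) := by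
  obtain ⟨q, rfl⟩ : ∃ q, p = q + 1 := ⟨p - 1, (Nat.succ_pred_eq_of_pos hp).symm⟩
  have hq : q + 1 - 1 = q := rfl
  rw [hq, poly_expand n q y]
  have h2 : ((q : ℚ)+2) ≠ 0 := by positivity
  -- rewrite LHS sum as sum over range n
  have lhs_eq : ∑ k ∈ Finset.Icc 1 n, ((n + 1).choose (k + 1) : ℚ) * y ^ (n - k) * pBernoulli k (q+1)
      = ∑ i ∈ range n, ((n+1).choose i : ℚ) * y^i * pBernoulli (n-i) (q+1) := by
    rw [← Finset.Ico_add_one_right_eq_Icc, Finset.sum_Ico_eq_sum_range]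
    have hrange : n + 1 - 1 = n := rfl
    rw [hrange, ← Finset.sum_range_reflect]
    apply Finset.sum_congr rfl
    intro i hi
    rw [Finset.mem_range] at hi
    have e1 : 1 + (n - 1 - i) = n - i := by omega
    have e2 : n - (n - i) = i := by omega
    have e3 : n - i + 1 = (n+1) - i := by omega
    rw [e1, e2, e3, Nat.choose_symm (by omega : i ≤ n + 1)]
  rw [lhs_eq]
  -- peel the top two terms of the RHS sum
  rw [Finset.sum_range_succ, Finset.sum_range_succ]
  have top1 : ∑ j ∈ range (n+2-(n+1)), ((n+1-(n+1)).choose j : ℚ) * pBernoulli j q = 1 := by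
    have : n+2-(n+1) = 1 := by omega
    rw [this]
    simp [pBernoulli]
  have top2 : ∑ j ∈ range (n+2-n), ((n+1-n).choose j : ℚ) * pBernoulli j q
      = 1 + ((q : ℚ) - ((q : ℚ)+1)^2/((q : ℚ)+2)) := by
    have e1 : n+2-n = 2 := by omega
    have e2 : n+1-n = 1 := by omega
    rw [e1, e2]
    simp [Finset.sum_range_succ, pBernoulli]
  rw [top1, top2]
  -- apply the closed form on the remaining sum
  have body : ∀ i ∈ range n,
      ((n+1).choose i : ℚ) * y^i * (∑ j ∈ range (n+2-i), ((n+1-i).choose j : ℚ) * pBernoulli j q)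
        = (-((q : ℚ)+1)^2/((q : ℚ)+2)) * (((n+1).choose i : ℚ) * y^i * pBernoulli (n-i) (q+1)) := by
    intro i hi
    rw [Finset.mem_range] at hi
    have e1 : n+2-i = (n-1-i)+3 := by omega
    have e2 : n+1-i = (n-1-i)+2 := by omega
    have e3 : (n-1-i)+1 = n-i := by omega
    rw [e1, e2, Tclosed (n-1-i) q, e3]
    ring
  rw [Finset.sum_congr rfl body, ← Finset.mul_sum]
  have cn : ((n+1).choose n : ℚ) = (n : ℚ) + 1 := by
    rw [Nat.choose_succ_self_right]
    push_cast; ring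
  have cn1 : ((n+1).choose (n+1) : ℚ) = 1 := by
    rw [Nat.choose_self]; norm_num
  rw [cn, cn1]
  push_cast
  field_simp
  ring
end
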